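/- arXiv:1201.3704 — 3 statements merged into one kernel-verified Lean document; each statement's English description precedes it below -/
import Mathlib

section
/- Assume the Popov matrix Π = [[Q, S],[Sᵀ, R]] is positive semidefinite, and let X and Y be two symmetric solutions of CGDARE(Σ). Then the reachable subspaces of the pairs (A_X, B G_X) and (A_Y, B G_Y) coincide: the subspace of ℝⁿ spanned by the columns of the matrices A_X^k B G_X for 0 ≤ k ≤ n−1 equals the subspace spanned by the columns of the matrices A_Y^k B G_Y for 0 ≤ k ≤ n−1. -/
open Matrix Finset

namespace Stmt16

variable {n m : ℕ}

lemma mulVec_ext {M N : Matrix (Fin n) (Fin m) ℝ}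
    (h : ∀ v, M *ᵥ v = N *ᵥ v) : M = N := by
  ext i j
  simpa [Matrix.mulVec_single] using congrFun (h (Pi.single j 1)) i

lemma dp3 {p q r : ℕ} (M : Matrix (Fin p) (Fin q) ℝ) (N : Matrix (Fin p) (Fin r) ℝ)
    (x : Fin q → ℝ) (y : Fin r → ℝ) :
    (M *ᵥ x) ⬝ᵥ (N *ᵥ y) = x ⬝ᵥ ((Mᵀ * N) *ᵥ y) := by
  rw [dotProduct_comm, dotProduct_mulVec, dotProduct_comm, ← Matrix.mulVec_transpose,
    Matrix.mulVec_mulVec]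

lemma pinv_symm (M P : Matrix (Fin m) (Fin m) ℝ) (hM : Mᵀ = M)
    (p1 : M * P * M = M) (p2 : P * M * P = P)
    (p3 : (M * P)ᵀ = M * P) (p4 : (P * M)ᵀ = P * M) : Pᵀ = P := by
  have h1 : M * Pᵀ = P * M := by
    calc M * Pᵀ = Mᵀ * Pᵀ := by rw [hM]
    _ = (P * M)ᵀ := (Matrix.transpose_mul P M).symm
    _ = P * M := p4
  have h2 : Pᵀ * M = M * P := by
    calc Pᵀ * M = Pᵀ * Mᵀ := by rw [hM]
    _ = (M * P)ᵀ := (Matrix.transpose_mul M P).symm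
    _ = M * P := p3
  have h3 : M * P = P * M := by
    have e1 : M * P = (M * P) * (P * M) := by
      calc M * P = Pᵀ * M := h2.symm
      _ = Pᵀ * (M * P * M) := by rw [p1]
      _ = (Pᵀ * M) * (P * M) := by noncomm_ring
      _ = (M * P) * (P * M) := by rw [h2]
    have e2 : P * M = (M * P) * (P * M) := by
      calc P * M = M * Pᵀ := h1.symm
      _ = (M * P * M) * Pᵀ := by rw [p1]
      _ = (M * P) * (M * Pᵀ) := by noncomm_ring
      _ = (M * P) * (P * M) := by rw [h1]
    rw [e1, ← e2]
  calc Pᵀ = (P * M * P)ᵀ := by rw [p2]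
  _ = Pᵀ * (M * Pᵀ) := by rw [Matrix.transpose_mul, Matrix.transpose_mul, hM]
  _ = Pᵀ * (P * M) := by rw [h1]
  _ = Pᵀ * (M * P) := by rw [← h3]
  _ = (Pᵀ * M) * P := by noncomm_ring
  _ = (P * M) * P := by rw [h2, h3]
  _ = P := p2


section Solution
variable (A : Matrix (Fin n) (Fin n) ℝ) (B : Matrix (Fin n) (Fin m) ℝ)
  (Q : Matrix (Fin n) (Fin n) ℝ) (S : Matrix (Fin n) (Fin m) ℝ) (R : Matrix (Fin m) (Fin m) ℝ)
  (Z : Matrix (Fin n) (Fin n) ℝ) (P : Matrix (Fin m) (Fin m) ℝ)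


lemma completion (hZ : Zᵀ = Z)
    (hRZs : (R + Bᵀ * Z * B)ᵀ = R + Bᵀ * Z * B)
    (hPs : Pᵀ = P)
    (hSG : (Aᵀ * Z * B + S) * (P * (R + Bᵀ * Z * B)) = Aᵀ * Z * B + S)
    (hG : Z = Aᵀ * Z * A - (Aᵀ * Z * B + S) * P * (Aᵀ * Z * B + S)ᵀ + Q)
    (x : Fin n → ℝ) (u : Fin m → ℝ) :
    Sum.elim x u ⬝ᵥ (fromBlocks Q S Sᵀ R) *ᵥ (Sum.elim x u)
    = x ⬝ᵥ Z *ᵥ x - (A *ᵥ x + B *ᵥ u) ⬝ᵥ Z *ᵥ (A *ᵥ x + B *ᵥ u)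
      + (u + (P * (Aᵀ * Z * B + S)ᵀ) *ᵥ x) ⬝ᵥ (R + Bᵀ * Z * B) *ᵥ
          (u + (P * (Aᵀ * Z * B + S)ᵀ) *ᵥ x) := by
  set RZ := R + Bᵀ * Z * B with hRZ
  set SZ := Aᵀ * Z * B + S with hSZ
  set K := P * SZᵀ with hK
  have idS : RZ * K = SZᵀ := by
    rw [hK, ← Matrix.mul_assoc]
    conv_rhs => rw [← hSG]
    rw [Matrix.transpose_mul, Matrix.transpose_mul, hRZs, hPs]
  have idSt : Kᵀ * RZ = SZ := by
    rw [hK, Matrix.transpose_mul, Matrix.transpose_transpose, hPs, Matrix.mul_assoc]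
    exact hSG
  have idQ : Q = Z - Aᵀ * Z * A + SZ * (P * SZᵀ) := by
    nth_rewrite 1 [hG]
    rw [Matrix.mul_assoc (SZ) P (SZᵀ)]
    abel
  have hS : S = SZ - Aᵀ * Z * B := by rw [hSZ]; abel
  have hSt : Sᵀ = SZᵀ - Bᵀ * Z * A := by
    rw [hS, Matrix.transpose_sub, Matrix.transpose_mul, Matrix.transpose_mul,
      Matrix.transpose_transpose, hZ, ← Matrix.mul_assoc]
  have hRR : R = RZ - Bᵀ * Z * B := by rw [hRZ]; abel
  rw [fromBlocks_mulVec, sumElim_dotProduct_sumElim]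
  have t1 : (A *ᵥ x) ⬝ᵥ Z *ᵥ (A *ᵥ x) = x ⬝ᵥ (Aᵀ * Z * A) *ᵥ x := by
    rw [dp3, Matrix.mulVec_mulVec, Matrix.mul_assoc]
  have t2 : (A *ᵥ x) ⬝ᵥ Z *ᵥ (B *ᵥ u) = x ⬝ᵥ (Aᵀ * Z * B) *ᵥ u := by
    rw [dp3, Matrix.mulVec_mulVec, Matrix.mul_assoc]
  have t3 : (B *ᵥ u) ⬝ᵥ Z *ᵥ (A *ᵥ x) = u ⬝ᵥ (Bᵀ * Z * A) *ᵥ x := by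
    rw [dp3, Matrix.mulVec_mulVec, Matrix.mul_assoc]
  have t4 : (B *ᵥ u) ⬝ᵥ Z *ᵥ (B *ᵥ u) = u ⬝ᵥ (Bᵀ * Z * B) *ᵥ u := by
    rw [dp3, Matrix.mulVec_mulVec, Matrix.mul_assoc]
  have t5 : u ⬝ᵥ RZ *ᵥ (K *ᵥ x) = u ⬝ᵥ SZᵀ *ᵥ x := by
    rw [Matrix.mulVec_mulVec, idS]
  have t6 : (K *ᵥ x) ⬝ᵥ RZ *ᵥ u = x ⬝ᵥ SZ *ᵥ u := by
    rw [dp3, idSt]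
  have t7 : (K *ᵥ x) ⬝ᵥ RZ *ᵥ (K *ᵥ x) = x ⬝ᵥ (SZ * (P * SZᵀ)) *ᵥ x := by
    rw [dp3, idSt, Matrix.mulVec_mulVec, hK]
  simp only [Matrix.mulVec_add, Matrix.add_mulVec, dotProduct_add, add_dotProduct,
    Sum.elim_comp_inl, Sum.elim_comp_inr]
  rw [t1, t2, t3, t4, t5, t6, t7, idQ, hSt, hS, hRR]
  simp only [Matrix.sub_mulVec, Matrix.add_mulVec, dotProduct_add, dotProduct_sub]
  ring


end Solution

def traj (M : Matrix (Fin n) (Fin n) ℝ) (B : Matrix (Fin n) (Fin m) ℝ)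
    (g : ℕ → Fin m → ℝ) : ℕ → Fin n → ℝ
  | 0 => 0
  | t+1 => M *ᵥ (traj M B g t) + B *ᵥ (g t)

lemma traj_closed (M : Matrix (Fin n) (Fin n) ℝ) (B : Matrix (Fin n) (Fin m) ℝ)
    (g : ℕ → Fin m → ℝ) (N : ℕ) :
    traj M B g N = ∑ t ∈ range N, (M ^ (N - 1 - t) * B) *ᵥ (g t) := by
  induction N with
  | zero => simp [traj]
  | succ N ih =>
    rw [traj, ih, Finset.sum_range_succ]
    congr 1
    · rw [← Matrix.mulVecLin_apply, map_sum]
      apply Finset.sum_congr rfl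
      intro t ht
      rw [Matrix.mulVecLin_apply, Matrix.mulVec_mulVec, ← Matrix.mul_assoc, ← pow_succ']
      have ht' : N - 1 - t + 1 = N + 1 - 1 - t := by
        simp only [mem_range] at ht; omega
      rw [ht']
    · simp

lemma sum_mulVec {ι : Type*} (s : Finset ι) (f : ι → Matrix (Fin n) (Fin m) ℝ)
    (v : Fin m → ℝ) : (∑ i ∈ s, f i) *ᵥ v = ∑ i ∈ s, (f i) *ᵥ v := by
  classical
  induction s using Finset.induction with
  | empty => simp
  | insert _ _ hn ih => simp [Finset.sum_insert hn, Matrix.add_mulVec, ih]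

lemma krylov (M : Matrix (Fin n) (Fin n) ℝ) (C : Matrix (Fin n) (Fin m) ℝ) (k : ℕ)
    (v : Fin m → ℝ) :
    (M ^ k * C) *ᵥ v ∈ ⨆ i : Fin n, LinearMap.range (M ^ (i : ℕ) * C).mulVecLin := by
  rcases Nat.eq_zero_or_pos n with hn | hn
  · subst hn
    have : (M ^ k * C) *ᵥ v = 0 := Subsingleton.elim _ _
    rw [this]; exact Submodule.zero_mem _
  · have hM : M ^ k = Polynomial.aeval M ((Polynomial.X : Polynomial ℝ) ^ k %ₘ M.charpoly) := by
      rw [← Matrix.aeval_eq_aeval_mod_charpoly, map_pow, Polynomial.aeval_X]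
    have hdeg : ((Polynomial.X : Polynomial ℝ) ^ k %ₘ M.charpoly).natDegree < n := by
      have h1 := Polynomial.natDegree_modByMonic_lt ((Polynomial.X : Polynomial ℝ) ^ k)
        (Matrix.charpoly_monic M)
      rw [Matrix.charpoly_natDegree_eq_dim, Fintype.card_fin] at h1
      exact h1 (by
        intro h
        have := congrArg Polynomial.natDegree h
        rw [Matrix.charpoly_natDegree_eq_dim, Fintype.card_fin, Polynomial.natDegree_one] at this
        omega)
    rw [hM, Polynomial.aeval_eq_sum_range' hdeg, ← Matrix.mulVec_mulVec, sum_mulVec]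
    apply Submodule.sum_mem
    intro i hi
    rw [Matrix.smul_mulVec, Matrix.mulVec_mulVec]
    apply Submodule.smul_mem
    exact (le_iSup (fun i : Fin n => LinearMap.range (M ^ (i : ℕ) * C).mulVecLin)
      ⟨i, Finset.mem_range.mp hi⟩) ⟨v, rfl⟩

lemma decomp {f : Fin n → Matrix (Fin n) (Fin m) ℝ} {x : Fin n → ℝ}
    (hx : x ∈ ⨆ i : Fin n, LinearMap.range (f i).mulVecLin) :
    ∃ u : Fin n → (Fin m → ℝ), x = ∑ i : Fin n, (f i) *ᵥ (u i) := by
  refine Submodule.iSup_induction (motive := fun x => ∃ u : Fin n → (Fin m → ℝ),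
    x = ∑ i : Fin n, (f i) *ᵥ (u i)) _ hx ?_ ?_ ?_
  · rintro i x ⟨w, rfl⟩
    refine ⟨fun j => if j = i then w else 0, ?_⟩
    rw [Finset.sum_eq_single i]
    · simp
    · intro j _ hj; simp [hj]
    · intro h; simp at h
  · exact ⟨0, by simp⟩
  · rintro x y ⟨u, hu⟩ ⟨u', hu'⟩
    exact ⟨u + u', by rw [hu, hu']; simp [Matrix.mulVec_add, Finset.sum_add_distrib]⟩


lemma psd_ker {M : Matrix (Fin m) (Fin m) ℝ} (hs : Mᵀ = M)
    (hpsd : ∀ w, 0 ≤ w ⬝ᵥ M *ᵥ w) {v : Fin m → ℝ} (hv : v ⬝ᵥ M *ᵥ v = 0) :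
    M *ᵥ v = 0 := by
  set w := M *ᵥ v with hw
  set a := w ⬝ᵥ M *ᵥ w with ha
  set b := w ⬝ᵥ w with hb
  have hvw : v ⬝ᵥ M *ᵥ w = b := by
    rw [dotProduct_mulVec, ← Matrix.mulVec_transpose, hs, hb]
  have hwv : w ⬝ᵥ M *ᵥ v = b := by rw [← hw, hb]
  have key : ∀ t : ℝ, 0 ≤ t ^ 2 * a + 2 * t * b := by
    intro t
    have h0 := hpsd (v + t • w)
    rw [Matrix.mulVec_add, Matrix.mulVec_smul, dotProduct_add, add_dotProduct,
      add_dotProduct, dotProduct_smul, smul_dotProduct, smul_dotProduct,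
      dotProduct_smul, hv, hvw, hwv, smul_eq_mul, smul_eq_mul, smul_eq_mul] at h0
    rw [ha] at *
    nlinarith [h0]
  have ha0 : 0 ≤ a := hpsd w
  have hb0 : 0 ≤ b := by rw [hb]; exact Finset.sum_nonneg fun i _ => mul_self_nonneg _
  have hb' : b = 0 := by
    have hA : (0:ℝ) < a + 1 := by linarith
    have h1 := key (-(b / (a + 1)))
    have h2 : (-(b / (a + 1))) ^ 2 * a + 2 * (-(b / (a + 1))) * b
        = (b ^ 2 * a - 2 * b ^ 2 * (a + 1)) / (a + 1) ^ 2 := by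
      field_simp
      ring
    rw [h2] at h1
    have h3 : 0 ≤ b ^ 2 * a - 2 * b ^ 2 * (a + 1) := by
      have := (div_nonneg_iff).mp h1
      rcases this with ⟨h, _⟩ | ⟨_, h⟩
      · exact h
      · nlinarith [sq_nonneg (a + 1)]
    nlinarith [sq_nonneg b]
  have : w = 0 := dotProduct_self_eq_zero.mp (by rw [← hb]; exact hb')
  exact this



lemma step_open (A : Matrix (Fin n) (Fin n) ℝ) (B : Matrix (Fin n) (Fin m) ℝ)
    (K : Matrix (Fin m) (Fin n) ℝ) (x : Fin n → ℝ) (g : Fin m → ℝ) :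
    (A - B * K) *ᵥ x + B *ᵥ g = A *ᵥ x + B *ᵥ (g - K *ᵥ x) := by
  rw [Matrix.sub_mulVec, Matrix.mulVec_sub, ← Matrix.mulVec_mulVec]
  abel

lemma traj_shift (M : Matrix (Fin n) (Fin n) ℝ) (B : Matrix (Fin n) (Fin m) ℝ)
    (g : ℕ → Fin m → ℝ) (a b : ℕ) :
    traj M B g (a + b) = M ^ b *ᵥ traj M B g a
      + ∑ j ∈ range b, (M ^ (b - 1 - j) * B) *ᵥ (g (a + j)) := by
  induction b with
  | zero => simp [Matrix.one_mulVec]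
  | succ b ih =>
    show traj M B g (a + b + 1) = _
    rw [traj, ih, Finset.sum_range_succ]
    rw [Matrix.mulVec_add, Matrix.mulVec_mulVec, ← pow_succ']
    rw [← Matrix.mulVecLin_apply (M := M), map_sum]
    have : ∀ t ∈ range b, M.mulVecLin ((M ^ (b - 1 - t) * B) *ᵥ g (a + t))
        = (M ^ (b + 1 - 1 - t) * B) *ᵥ g (a + t) := by
      intro t ht
      rw [Matrix.mulVecLin_apply, Matrix.mulVec_mulVec, ← Matrix.mul_assoc, ← pow_succ']
      have ht' : b - 1 - t + 1 = b + 1 - 1 - t := by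
        simp only [mem_range] at ht; omega
      rw [ht']
    rw [Finset.sum_congr rfl this]
    have hb : b + 1 - 1 - b = 0 := by omega
    rw [hb, pow_zero, Matrix.one_mul]
    abel

section Solution2
variable (A : Matrix (Fin n) (Fin n) ℝ) (B : Matrix (Fin n) (Fin m) ℝ)
  (Q : Matrix (Fin n) (Fin n) ℝ) (S : Matrix (Fin n) (Fin m) ℝ) (R : Matrix (Fin m) (Fin m) ℝ)
  (Z : Matrix (Fin n) (Fin n) ℝ) (P : Matrix (Fin m) (Fin m) ℝ)

lemma SG_of_ker
    (p1 : (R + Bᵀ * Z * B) * P * (R + Bᵀ * Z * B) = R + Bᵀ * Z * B)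
    (hker : ∀ v : Fin m → ℝ, (R + Bᵀ * Z * B) *ᵥ v = 0 → (Aᵀ * Z * B + S) *ᵥ v = 0) :
    (Aᵀ * Z * B + S) * (P * (R + Bᵀ * Z * B)) = Aᵀ * Z * B + S := by
  apply mulVec_ext
  intro v
  have h1 : (R + Bᵀ * Z * B) *ᵥ (v - (P * (R + Bᵀ * Z * B)) *ᵥ v) = 0 := by
    rw [Matrix.mulVec_sub, Matrix.mulVec_mulVec, ← Matrix.mul_assoc, p1, sub_self]
  have h2 := hker _ h1
  rw [Matrix.mulVec_sub, Matrix.mulVec_mulVec, sub_eq_zero] at h2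
  exact h2.symm

lemma sum_identity (hZ : Zᵀ = Z)
    (hRZs : (R + Bᵀ * Z * B)ᵀ = R + Bᵀ * Z * B)
    (hPs : Pᵀ = P)
    (hSG : (Aᵀ * Z * B + S) * (P * (R + Bᵀ * Z * B)) = Aᵀ * Z * B + S)
    (hG : Z = Aᵀ * Z * A - (Aᵀ * Z * B + S) * P * (Aᵀ * Z * B + S)ᵀ + Q)
    (u : ℕ → Fin m → ℝ) (xs : ℕ → Fin n → ℝ) (hx0 : xs 0 = 0)
    (hstep : ∀ t, xs (t + 1) = A *ᵥ xs t + B *ᵥ u t) (N : ℕ) :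
    ∑ t ∈ range N, (Sum.elim (xs t) (u t) ⬝ᵥ (fromBlocks Q S Sᵀ R) *ᵥ Sum.elim (xs t) (u t))
    = -(xs N ⬝ᵥ Z *ᵥ xs N)
      + ∑ t ∈ range N, ((u t + (P * (Aᵀ * Z * B + S)ᵀ) *ᵥ xs t) ⬝ᵥ (R + Bᵀ * Z * B) *ᵥ
          (u t + (P * (Aᵀ * Z * B + S)ᵀ) *ᵥ xs t)) := by
  have e : ∀ t ∈ range N,
      Sum.elim (xs t) (u t) ⬝ᵥ (fromBlocks Q S Sᵀ R) *ᵥ Sum.elim (xs t) (u t)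
      = (xs t ⬝ᵥ Z *ᵥ xs t - xs (t+1) ⬝ᵥ Z *ᵥ xs (t+1))
        + ((u t + (P * (Aᵀ * Z * B + S)ᵀ) *ᵥ xs t) ⬝ᵥ (R + Bᵀ * Z * B) *ᵥ
            (u t + (P * (Aᵀ * Z * B + S)ᵀ) *ᵥ xs t)) := by
    intro t _
    rw [completion A B Q S R Z P hZ hRZs hPs hSG hG (xs t) (u t), hstep t]
  rw [Finset.sum_congr rfl e, Finset.sum_add_distrib,
    Finset.sum_range_sub' (fun t => xs t ⬝ᵥ Z *ᵥ xs t) N, hx0]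
  simp [Matrix.mulVec_zero]

lemma RZ_psd
    (hPi : (Matrix.fromBlocks Q S Sᵀ R).PosSemidef)
    (hZ : Zᵀ = Z)
    (hRZs : (R + Bᵀ * Z * B)ᵀ = R + Bᵀ * Z * B)
    (hPs : Pᵀ = P)
    (hSG : (Aᵀ * Z * B + S) * (P * (R + Bᵀ * Z * B)) = Aᵀ * Z * B + S)
    (hG : Z = Aᵀ * Z * A - (Aᵀ * Z * B + S) * P * (Aᵀ * Z * B + S)ᵀ + Q)
    (v : Fin m → ℝ) : 0 ≤ v ⬝ᵥ (R + Bᵀ * Z * B) *ᵥ v := by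
  set K := P * (Aᵀ * Z * B + S)ᵀ with hKdef
  set AZ := A - B * K with hAZ
  have hdep : ¬ LinearIndependent ℝ (fun i : Fin (n+1) => (AZ ^ (i : ℕ)) *ᵥ (B *ᵥ v)) := by
    intro h
    have := h.fintype_card_le_finrank
    simp [Module.finrank_pi] at this
  obtain ⟨d, hd0, i0, hi0⟩ := Fintype.not_linearIndependent_iff.mp hdep
  set c : ℕ → ℝ := fun j => if h : j < n + 1 then d ⟨j, h⟩ else 0 with hc
  set g : ℕ → Fin m → ℝ := fun t => c (n - t) • v with hgdef
  set xs := traj AZ B g with hxs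
  set u : ℕ → Fin m → ℝ := fun t => g t - K *ᵥ xs t with hu
  have hstep : ∀ t, xs (t + 1) = A *ᵥ xs t + B *ᵥ u t := by
    intro t
    simp only [hu, hxs]
    rw [traj, hAZ, step_open]
  have hdsum : ∑ j ∈ range (n+1), c j • ((AZ ^ j) *ᵥ (B *ᵥ v)) = 0 := by
    rw [← Fin.sum_univ_eq_sum_range (fun j => c j • ((AZ ^ j) *ᵥ (B *ᵥ v))) (n+1), ← hd0]
    apply Finset.sum_congr rfl
    intro i _
    have hci : c (i : ℕ) = d i := by simp only [hc]; rw [dif_pos i.isLt]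
    rw [hci]
  have hxN : xs (n + 1) = 0 := by
    rw [hxs, traj_closed]
    have e : ∀ t ∈ range (n+1), (AZ ^ (n + 1 - 1 - t) * B) *ᵥ (g t)
        = c (n - t) • ((AZ ^ (n - t)) *ᵥ (B *ᵥ v)) := by
      intro t ht
      have h1 : n + 1 - 1 - t = n - t := by omega
      simp only [hgdef]
      rw [h1, Matrix.mulVec_smul, ← Matrix.mulVec_mulVec]
    rw [Finset.sum_congr rfl e]
    have := Finset.sum_range_reflect (fun j => c j • ((AZ ^ j) *ᵥ (B *ᵥ v))) (n+1)
    simp only [Nat.add_sub_cancel] at this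
    rw [this]
    exact hdsum
  have hsum := sum_identity A B Q S R Z P hZ hRZs hPs hSG hG u xs rfl hstep (n+1)
  rw [hxN] at hsum
  have hresid : ∀ t ∈ range (n+1),
      (u t + (P * (Aᵀ * Z * B + S)ᵀ) *ᵥ xs t) ⬝ᵥ (R + Bᵀ * Z * B) *ᵥ
        (u t + (P * (Aᵀ * Z * B + S)ᵀ) *ᵥ xs t)
      = c (n - t) ^ 2 * (v ⬝ᵥ (R + Bᵀ * Z * B) *ᵥ v) := by
    intro t _
    have h1 : u t + (P * (Aᵀ * Z * B + S)ᵀ) *ᵥ xs t = g t := by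
      simp only [hu, ← hKdef]
      abel
    rw [h1]
    simp only [hgdef]
    rw [Matrix.mulVec_smul, dotProduct_smul, smul_dotProduct, smul_eq_mul, smul_eq_mul]
    ring
  rw [Finset.sum_congr rfl hresid, ← Finset.sum_mul] at hsum
  have hpos : 0 ≤ ∑ t ∈ range (n+1),
      Sum.elim (xs t) (u t) ⬝ᵥ (fromBlocks Q S Sᵀ R) *ᵥ Sum.elim (xs t) (u t) :=
    Finset.sum_nonneg fun t _ => by simpa using hPi.dotProduct_mulVec_nonneg (Sum.elim (xs t) (u t))
  rw [hsum] at hpos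
  have hcpos : 0 < ∑ t ∈ range (n+1), c (n - t) ^ 2 := by
    have h1 : ∑ t ∈ range (n+1), c (n - t) ^ 2 = ∑ j ∈ range (n+1), c j ^ 2 := by
      have := Finset.sum_range_reflect (fun j => c j ^ 2) (n+1)
      rw [← this]
      apply Finset.sum_congr rfl
      intro t ht
      have h1 : n + 1 - 1 - t = n - t := by omega
      rw [h1]
    rw [h1]
    have h2 : c (i0 : ℕ) ^ 2 > 0 := by
      have : c (i0 : ℕ) = d i0 := by simp only [hc]; rw [dif_pos i0.isLt]
      rw [this]
      positivity
    apply lt_of_lt_of_le h2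
    apply Finset.single_le_sum (fun j _ => sq_nonneg (c j)) (Finset.mem_range.mpr i0.isLt)
  rw [Matrix.mulVec_zero, dotProduct_zero, neg_zero, zero_add] at hpos
  by_contra hq
  push_neg at hq
  have := mul_neg_of_pos_of_neg hcpos hq
  linarith

lemma traj_mem
    (p1 : (R + Bᵀ * Z * B) * P * (R + Bᵀ * Z * B) = R + Bᵀ * Z * B)
    (g : ℕ → Fin m → ℝ) (N : ℕ)
    (hg : ∀ t, t < N → (R + Bᵀ * Z * B) *ᵥ g t = 0) :
    traj (A - B * (P * (Aᵀ * Z * B + S)ᵀ)) B g N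
      ∈ ⨆ i : Fin n, LinearMap.range
        (((A - B * (P * (Aᵀ * Z * B + S)ᵀ)) ^ (i : ℕ)
            * (B * (1 - P * (R + Bᵀ * Z * B)))).mulVecLin) := by
  rw [traj_closed]
  apply Submodule.sum_mem
  intro t ht
  have hfix : (1 - P * (R + Bᵀ * Z * B)) *ᵥ g t = g t := by
    rw [Matrix.sub_mulVec, Matrix.one_mulVec, ← Matrix.mulVec_mulVec,
      hg t (Finset.mem_range.mp ht), Matrix.mulVec_zero, sub_zero]
  have h2 : ((A - B * (P * (Aᵀ * Z * B + S)ᵀ)) ^ (N - 1 - t) * B) *ᵥ g t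
      = ((A - B * (P * (Aᵀ * Z * B + S)ᵀ)) ^ (N - 1 - t)
          * (B * (1 - P * (R + Bᵀ * Z * B)))) *ᵥ g t := by
    conv_lhs => rw [← hfix]
    rw [← Matrix.mulVec_mulVec, ← Matrix.mulVec_mulVec, ← Matrix.mulVec_mulVec]
  rw [h2]
  exact krylov _ _ _ _

end Solution2


lemma incl {n m : ℕ}
    (A : Matrix (Fin n) (Fin n) ℝ) (B : Matrix (Fin n) (Fin m) ℝ)
    (Q : Matrix (Fin n) (Fin n) ℝ) (S : Matrix (Fin n) (Fin m) ℝ)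
    (R : Matrix (Fin m) (Fin m) ℝ)
    (hR : Rᵀ = R)
    (hPi : (Matrix.fromBlocks Q S Sᵀ R).PosSemidef)
    (X Y : Matrix (Fin n) (Fin n) ℝ) (hX : Xᵀ = X) (hY : Yᵀ = Y)
    (RXd RYd : Matrix (Fin m) (Fin m) ℝ)
    (penX1 : (R + Bᵀ * X * B) * RXd * (R + Bᵀ * X * B) = R + Bᵀ * X * B)
    (penX2 : RXd * (R + Bᵀ * X * B) * RXd = RXd)
    (penX3 : ((R + Bᵀ * X * B) * RXd)ᵀ = (R + Bᵀ * X * B) * RXd)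
    (penX4 : (RXd * (R + Bᵀ * X * B))ᵀ = RXd * (R + Bᵀ * X * B))
    (penY1 : (R + Bᵀ * Y * B) * RYd * (R + Bᵀ * Y * B) = R + Bᵀ * Y * B)
    (penY2 : RYd * (R + Bᵀ * Y * B) * RYd = RYd)
    (penY3 : ((R + Bᵀ * Y * B) * RYd)ᵀ = (R + Bᵀ * Y * B) * RYd)
    (penY4 : (RYd * (R + Bᵀ * Y * B))ᵀ = RYd * (R + Bᵀ * Y * B))
    (hGDAREX : X = Aᵀ * X * A - (Aᵀ * X * B + S) * RXd * (Aᵀ * X * B + S)ᵀ + Q)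
    (hGDAREY : Y = Aᵀ * Y * A - (Aᵀ * Y * B + S) * RYd * (Aᵀ * Y * B + S)ᵀ + Q)
    (hkerX : ∀ v : Fin m → ℝ, (R + Bᵀ * X * B).mulVec v = 0 → (Aᵀ * X * B + S).mulVec v = 0)
    (hkerY : ∀ v : Fin m → ℝ, (R + Bᵀ * Y * B).mulVec v = 0 → (Aᵀ * Y * B + S).mulVec v = 0) :
    (⨆ k : Fin n, LinearMap.range
        (Matrix.mulVecLin ((A - B * (RXd * (Aᵀ * X * B + S)ᵀ)) ^ (k : ℕ) * (B * (1 - RXd * (R + Bᵀ * X * B))))))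
    ≤ (⨆ k : Fin n, LinearMap.range
        (Matrix.mulVecLin ((A - B * (RYd * (Aᵀ * Y * B + S)ᵀ)) ^ (k : ℕ) * (B * (1 - RYd * (R + Bᵀ * Y * B)))))) := by
  have hRXs : (R + Bᵀ * X * B)ᵀ = R + Bᵀ * X * B := by
    rw [Matrix.transpose_add, hR]
    congr 1
    rw [Matrix.transpose_mul, Matrix.transpose_mul, Matrix.transpose_transpose, hX,
      ← Matrix.mul_assoc]
  have hRYs : (R + Bᵀ * Y * B)ᵀ = R + Bᵀ * Y * B := by
    rw [Matrix.transpose_add, hR]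
    congr 1
    rw [Matrix.transpose_mul, Matrix.transpose_mul, Matrix.transpose_transpose, hY,
      ← Matrix.mul_assoc]
  have hPXs : RXdᵀ = RXd := pinv_symm _ _ hRXs penX1 penX2 penX3 penX4
  have hPYs : RYdᵀ = RYd := pinv_symm _ _ hRYs penY1 penY2 penY3 penY4
  have hSGX := SG_of_ker A B S R X RXd penX1 hkerX
  have hSGY := SG_of_ker A B S R Y RYd penY1 hkerY
  have psdY : ∀ v, 0 ≤ v ⬝ᵥ (R + Bᵀ * Y * B) *ᵥ v :=
    RZ_psd A B Q S R Y RYd hPi hY hRYs hPYs hSGY hGDAREY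
  have hRG : ∀ z : Fin m → ℝ, (R + Bᵀ * X * B) *ᵥ ((1 - RXd * (R + Bᵀ * X * B)) *ᵥ z) = 0 := by
    intro z
    rw [Matrix.mulVec_mulVec]
    have h0 : (R + Bᵀ * X * B) * (1 - RXd * (R + Bᵀ * X * B)) = 0 := by
      rw [Matrix.mul_sub, Matrix.mul_one, ← Matrix.mul_assoc, penX1, sub_self]
    rw [h0, Matrix.zero_mulVec]
  apply iSup_le
  intro k
  rintro x ⟨w, rfl⟩
  have hmem := krylov (A - B * (RXd * (Aᵀ * X * B + S)ᵀ)) (B * (1 - RXd * (R + Bᵀ * X * B))) ((k : ℕ) + n) w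
  obtain ⟨uu, huu⟩ := decomp (Submodule.neg_mem _ hmem)
  set vv : ℕ → Fin m → ℝ := fun i => if h : i < n then uu ⟨i, h⟩ else 0 with hvv
  set N := (k : ℕ) + 1 + n with hN
  set g : ℕ → Fin m → ℝ := fun t =>
    if t = 0 then (1 - RXd * (R + Bᵀ * X * B)) *ᵥ w
    else if (k : ℕ) + 1 ≤ t ∧ t < (k : ℕ) + 1 + n then
      (1 - RXd * (R + Bᵀ * X * B)) *ᵥ vv (n - 1 - (t - ((k : ℕ) + 1)))
    else 0 with hgdef
  have hgker : ∀ t, (R + Bᵀ * X * B) *ᵥ g t = 0 := by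
    intro t
    simp only [hgdef]
    split_ifs with h1 h2
    · exact hRG _
    · exact hRG _
    · exact Matrix.mulVec_zero _
  set xs := traj (A - B * (RXd * (Aᵀ * X * B + S)ᵀ)) B g with hxs
  set us : ℕ → Fin m → ℝ := fun t => g t - (RXd * (Aᵀ * X * B + S)ᵀ) *ᵥ xs t with hus
  have hstep : ∀ t, xs (t + 1) = A *ᵥ xs t + B *ᵥ us t := by
    intro t
    simp only [hus, hxs]
    rw [traj, step_open]
  have hx1 : xs ((k : ℕ) + 1) = ((A - B * (RXd * (Aᵀ * X * B + S)ᵀ)) ^ (k : ℕ) * (B * (1 - RXd * (R + Bᵀ * X * B)))) *ᵥ w := by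
    rw [hxs, traj_closed]
    rw [Finset.sum_eq_single 0]
    · have hg00 : g 0 = (1 - RXd * (R + Bᵀ * X * B)) *ᵥ w := by simp [hgdef]
      rw [hg00, Nat.sub_zero, Nat.add_sub_cancel, Matrix.mulVec_mulVec, Matrix.mul_assoc]
    · intro t ht ht0
      have ht' : t < (k : ℕ) + 1 := Finset.mem_range.mp ht
      have hg0 : g t = 0 := by
        simp only [hgdef]
        rw [if_neg ht0, if_neg (by omega)]
      rw [hg0, Matrix.mulVec_zero]
    · intro h
      exact absurd (Finset.mem_range.mpr (by omega)) h
  have hxN : xs N = 0 := by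
    have hsplit := traj_shift (A - B * (RXd * (Aᵀ * X * B + S)ᵀ)) B g ((k : ℕ) + 1) n
    rw [← hxs, hx1] at hsplit
    rw [hN, hsplit]
    have e : ∀ j ∈ range n, ((A - B * (RXd * (Aᵀ * X * B + S)ᵀ)) ^ (n - 1 - j) * B) *ᵥ (g ((k : ℕ) + 1 + j))
        = ((A - B * (RXd * (Aᵀ * X * B + S)ᵀ)) ^ (n - 1 - j) * (B * (1 - RXd * (R + Bᵀ * X * B)))) *ᵥ vv (n - 1 - j) := by
      intro j hj
      have hj' : j < n := Finset.mem_range.mp hj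
      have hgj : g ((k : ℕ) + 1 + j) = (1 - RXd * (R + Bᵀ * X * B)) *ᵥ vv (n - 1 - j) := by
        simp only [hgdef]
        rw [if_neg (by omega), if_pos ⟨by omega, by omega⟩]
        have harg : (k : ℕ) + 1 + j - ((k : ℕ) + 1) = j := by omega
        rw [harg]
      rw [hgj, Matrix.mulVec_mulVec, Matrix.mul_assoc]
    rw [Finset.sum_congr rfl e]
    have hrefl := Finset.sum_range_reflect (fun i => ((A - B * (RXd * (Aᵀ * X * B + S)ᵀ)) ^ i * (B * (1 - RXd * (R + Bᵀ * X * B)))) *ᵥ vv i) n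
    rw [hrefl]
    have e2 : ∑ j ∈ range n, ((A - B * (RXd * (Aᵀ * X * B + S)ᵀ)) ^ j * (B * (1 - RXd * (R + Bᵀ * X * B)))) *ᵥ vv j
        = ∑ i : Fin n, ((A - B * (RXd * (Aᵀ * X * B + S)ᵀ)) ^ (i : ℕ) * (B * (1 - RXd * (R + Bᵀ * X * B)))) *ᵥ (uu i) := by
      rw [← Fin.sum_univ_eq_sum_range]
      apply Finset.sum_congr rfl
      intro i _
      simp only [hvv]
      rw [dif_pos i.isLt]
    rw [e2, ← huu, Matrix.mulVec_mulVec, ← Matrix.mul_assoc, ← pow_add]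
    have hnk : n + (k : ℕ) = (k : ℕ) + n := Nat.add_comm n (k : ℕ)
    rw [hnk]
    exact add_neg_cancel _
  have sumX := sum_identity A B Q S R X RXd hX hRXs hPXs hSGX hGDAREX us xs rfl hstep N
  have sumY := sum_identity A B Q S R Y RYd hY hRYs hPYs hSGY hGDAREY us xs rfl hstep N
  have hresidX : ∀ t ∈ range N,
      (us t + (RXd * (Aᵀ * X * B + S)ᵀ) *ᵥ xs t) ⬝ᵥ (R + Bᵀ * X * B) *ᵥ
        (us t + (RXd * (Aᵀ * X * B + S)ᵀ) *ᵥ xs t) = 0 := by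
    intro t _
    have h1 : us t + (RXd * (Aᵀ * X * B + S)ᵀ) *ᵥ xs t = g t := by
      simp only [hus]; abel
    rw [h1, hgker t, dotProduct_zero]
  rw [hxN, Finset.sum_eq_zero hresidX, Matrix.mulVec_zero, dotProduct_zero, neg_zero,
    add_zero] at sumX
  rw [hxN, Matrix.mulVec_zero, dotProduct_zero, neg_zero, zero_add] at sumY
  have hzero : ∑ t ∈ range N, ((us t + (RYd * (Aᵀ * Y * B + S)ᵀ) *ᵥ xs t) ⬝ᵥ
      (R + Bᵀ * Y * B) *ᵥ (us t + (RYd * (Aᵀ * Y * B + S)ᵀ) *ᵥ xs t)) = 0 := by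
    rw [← sumY, sumX]
  have hallzero := (Finset.sum_eq_zero_iff_of_nonneg
    (fun t _ => psdY (us t + (RYd * (Aᵀ * Y * B + S)ᵀ) *ᵥ xs t))).mp hzero
  set eta : ℕ → Fin m → ℝ := fun t => us t + (RYd * (Aᵀ * Y * B + S)ᵀ) *ᵥ xs t with heta
  have hketa : ∀ t, t < N → (R + Bᵀ * Y * B) *ᵥ eta t = 0 := by
    intro t ht
    exact psd_ker hRYs psdY (hallzero t (Finset.mem_range.mpr ht))
  have hYtraj : ∀ t, xs t = traj (A - B * (RYd * (Aᵀ * Y * B + S)ᵀ)) B eta t := by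
    intro t
    induction t with
    | zero => simp [hxs, traj]
    | succ t ih =>
      rw [traj, ← ih, step_open, hstep t]
      have h2 : eta t - (RYd * (Aᵀ * Y * B + S)ᵀ) *ᵥ xs t = us t := by
        simp only [heta]; abel
      rw [h2]
  have hgoal : Matrix.mulVecLin ((A - B * (RXd * (Aᵀ * X * B + S)ᵀ)) ^ (k : ℕ) * (B * (1 - RXd * (R + Bᵀ * X * B)))) w = traj (A - B * (RYd * (Aᵀ * Y * B + S)ᵀ)) B eta ((k : ℕ) + 1) := by
    rw [Matrix.mulVecLin_apply, ← hx1, hYtraj ((k : ℕ) + 1)]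
  rw [hgoal]
  exact traj_mem A B S R Y RYd penY1 eta ((k : ℕ) + 1) (fun t ht => hketa t (by omega))

end Stmt16

theorem stmt_16 (n m : ℕ)
    (A : Matrix (Fin n) (Fin n) ℝ) (B : Matrix (Fin n) (Fin m) ℝ)
    (Q : Matrix (Fin n) (Fin n) ℝ) (S : Matrix (Fin n) (Fin m) ℝ)
    (R : Matrix (Fin m) (Fin m) ℝ)
    (hQ : Qᵀ = Q) (hR : Rᵀ = R)
    (hPi : (Matrix.fromBlocks Q S Sᵀ R).PosSemidef)
    (X Y : Matrix (Fin n) (Fin n) ℝ) (hX : Xᵀ = X) (hY : Yᵀ = Y)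
    (RXd RYd : Matrix (Fin m) (Fin m) ℝ)
    (penX1 : (R + Bᵀ * X * B) * RXd * (R + Bᵀ * X * B) = R + Bᵀ * X * B)
    (penX2 : RXd * (R + Bᵀ * X * B) * RXd = RXd)
    (penX3 : ((R + Bᵀ * X * B) * RXd)ᵀ = (R + Bᵀ * X * B) * RXd)
    (penX4 : (RXd * (R + Bᵀ * X * B))ᵀ = RXd * (R + Bᵀ * X * B))
    (penY1 : (R + Bᵀ * Y * B) * RYd * (R + Bᵀ * Y * B) = R + Bᵀ * Y * B)
    (penY2 : RYd * (R + Bᵀ * Y * B) * RYd = RYd)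
    (penY3 : ((R + Bᵀ * Y * B) * RYd)ᵀ = (R + Bᵀ * Y * B) * RYd)
    (penY4 : (RYd * (R + Bᵀ * Y * B))ᵀ = RYd * (R + Bᵀ * Y * B))
    (hGDAREX : X = Aᵀ * X * A - (Aᵀ * X * B + S) * RXd * (Aᵀ * X * B + S)ᵀ + Q)
    (hGDAREY : Y = Aᵀ * Y * A - (Aᵀ * Y * B + S) * RYd * (Aᵀ * Y * B + S)ᵀ + Q)
    (hkerX : ∀ v : Fin m → ℝ, (R + Bᵀ * X * B).mulVec v = 0 → (Aᵀ * X * B + S).mulVec v = 0)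
    (hkerY : ∀ v : Fin m → ℝ, (R + Bᵀ * Y * B).mulVec v = 0 → (Aᵀ * Y * B + S).mulVec v = 0) :
    (⨆ k : Fin n, LinearMap.range
        (Matrix.mulVecLin ((A - B * (RXd * (Aᵀ * X * B + S)ᵀ)) ^ (k : ℕ)
          * (B * (1 - RXd * (R + Bᵀ * X * B))))))
    = (⨆ k : Fin n, LinearMap.range
        (Matrix.mulVecLin ((A - B * (RYd * (Aᵀ * Y * B + S)ᵀ)) ^ (k : ℕ)
          * (B * (1 - RYd * (R + Bᵀ * Y * B)))))) :=
  le_antisymm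
    (Stmt16.incl A B Q S R hR hPi X Y hX hY RXd RYd penX1 penX2 penX3 penX4
      penY1 penY2 penY3 penY4 hGDAREX hGDAREY hkerX hkerY)
    (Stmt16.incl A B Q S R hR hPi Y X hY hX RYd RXd penY1 penY2 penY3 penY4
      penX1 penX2 penX3 penX4 hGDAREY hGDAREX hkerY hkerX)
end

section
/- Let X ∈ ℝ^{n×n} be symmetric and let z ∈ ℂ be such that both zI_n − A and zI_n − A_X are invertible (all real matrices viewed as complex matrices via entrywise coercion). Then T_X(z) := I_m + K_X (zI_n − A)⁻¹ B is invertible with inverse I_m − K_X (zI_n − A_X)⁻¹ B; that is, (I_m + K_X (zI_n − A)⁻¹ B) · (I_m − K_X (zI_n − A_X)⁻¹ B) = I_m. -/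
open Matrix

/-- Entrywise coercion of a real matrix to a complex matrix. -/
noncomputable def toC {k l : Type*} (M : Matrix k l ℝ) : Matrix k l ℂ :=
  M.map (algebraMap ℝ ℂ)

theorem stmt_18 (n m : ℕ)
    (A : Matrix (Fin n) (Fin n) ℝ) (B : Matrix (Fin n) (Fin m) ℝ)
    (Q : Matrix (Fin n) (Fin n) ℝ) (S : Matrix (Fin n) (Fin m) ℝ)
    (R : Matrix (Fin m) (Fin m) ℝ)
    (hQ : Qᵀ = Q) (hR : Rᵀ = R)
    (X : Matrix (Fin n) (Fin n) ℝ) (hX : Xᵀ = X)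
    (RXd : Matrix (Fin m) (Fin m) ℝ)
    (pen1 : (R + Bᵀ * X * B) * RXd * (R + Bᵀ * X * B) = R + Bᵀ * X * B)
    (pen2 : RXd * (R + Bᵀ * X * B) * RXd = RXd)
    (pen3 : ((R + Bᵀ * X * B) * RXd)ᵀ = (R + Bᵀ * X * B) * RXd)
    (pen4 : (RXd * (R + Bᵀ * X * B))ᵀ = RXd * (R + Bᵀ * X * B))
    (z : ℂ)
    (hinv1 : IsUnit (z • (1 : Matrix (Fin n) (Fin n) ℂ) - toC A))
    (hinv2 : IsUnit (z • (1 : Matrix (Fin n) (Fin n) ℂ)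
        - toC (A - B * (RXd * (Aᵀ * X * B + S)ᵀ)))) :
    ((1 : Matrix (Fin m) (Fin m) ℂ)
        + toC (RXd * (Aᵀ * X * B + S)ᵀ)
          * (z • (1 : Matrix (Fin n) (Fin n) ℂ) - toC A)⁻¹ * toC B)
      * ((1 : Matrix (Fin m) (Fin m) ℂ)
        - toC (RXd * (Aᵀ * X * B + S)ᵀ)
          * (z • (1 : Matrix (Fin n) (Fin n) ℂ)
              - toC (A - B * (RXd * (Aᵀ * X * B + S)ᵀ)))⁻¹ * toC B)
    = 1 := by
  set K : Matrix (Fin m) (Fin n) ℂ := toC (RXd * (Aᵀ * X * B + S)ᵀ) with hK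
  set Bc : Matrix (Fin n) (Fin m) ℂ := toC B with hBc
  set M : Matrix (Fin n) (Fin n) ℂ := z • (1 : Matrix (Fin n) (Fin n) ℂ) - toC A with hM
  set N : Matrix (Fin n) (Fin n) ℂ :=
    z • (1 : Matrix (Fin n) (Fin n) ℂ) - toC (A - B * (RXd * (Aᵀ * X * B + S)ᵀ)) with hN
  have hMN : M + Bc * K = N := by
    rw [hM, hN, hBc, hK]
    have : toC (A - B * (RXd * (Aᵀ * X * B + S)ᵀ))
        = toC A - toC B * toC (RXd * (Aᵀ * X * B + S)ᵀ) := by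
      simp only [toC, Matrix.map_sub _ (map_sub (algebraMap ℝ ℂ)), Matrix.map_mul]
    rw [this]
    abel
  have hMi : M⁻¹ * M = 1 :=
    Matrix.nonsing_inv_mul M ((Matrix.isUnit_iff_isUnit_det M).mp hinv1)
  have hNi : N * N⁻¹ = 1 :=
    Matrix.mul_nonsing_inv N ((Matrix.isUnit_iff_isUnit_det N).mp hinv2)
  set Mi := M⁻¹
  set Ni := N⁻¹
  have hMcancel : ∀ Y : Matrix (Fin n) (Fin m) ℂ, Mi * (M * Y) = Y := by
    intro Y; rw [← Matrix.mul_assoc, hMi, Matrix.one_mul]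
  have h1 : K * Ni * Bc + K * Mi * Bc * (K * Ni * Bc) = K * Mi * Bc := by
    calc K * Ni * Bc + K * Mi * Bc * (K * Ni * Bc)
        = K * (Mi * (M * (Ni * Bc))) + K * (Mi * (Bc * (K * (Ni * Bc)))) := by
          rw [hMcancel]
          simp only [Matrix.mul_assoc]
      _ = K * (Mi * (M * (Ni * Bc) + Bc * K * (Ni * Bc))) := by
          rw [Matrix.mul_assoc Bc K (Ni * Bc), ← Matrix.mul_add, ← Matrix.mul_add]
      _ = K * (Mi * ((M + Bc * K) * (Ni * Bc))) := by rw [Matrix.add_mul]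
      _ = K * (Mi * (N * Ni * Bc)) := by rw [hMN, Matrix.mul_assoc]
      _ = K * Mi * Bc := by rw [hNi, Matrix.one_mul, Matrix.mul_assoc]
  calc (1 + K * Mi * Bc) * (1 - K * Ni * Bc)
      = 1 + K * Mi * Bc - (K * Ni * Bc + K * Mi * Bc * (K * Ni * Bc)) := by
        rw [Matrix.mul_sub, Matrix.mul_one, Matrix.add_mul, Matrix.one_mul]
    _ = 1 := by rw [h1]; abel
end

section
/- Let X be a symmetric solution of CGDARE(Σ). Then for every nonzero z ∈ ℂ such that zI_n − A and z⁻¹I_n − Aᵀ are invertible (all real matrices viewed as complex matrices via entrywise coercion), the Popov function admits the square spectral factorization [Bᵀ(z⁻¹I_n − Aᵀ)⁻¹ I_m] · Π · [(zI_n − A)⁻¹B ; I_m] = (I_m + Bᵀ(z⁻¹I_n − Aᵀ)⁻¹ K_Xᵀ) · R_X · (I_m + K_X (zI_n − A)⁻¹ B). -/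
open Matrix

lemma toC_mul {k l o : Type*} [Fintype l] (M : Matrix k l ℝ) (N : Matrix l o ℝ) :
    toC (M * N) = toC M * toC N := Matrix.map_mul

lemma toC_add {k l : Type*} (M N : Matrix k l ℝ) : toC (M + N) = toC M + toC N :=
  Matrix.map_add _ (by simp) M N

lemma toC_sub {k l : Type*} (M N : Matrix k l ℝ) : toC (M - N) = toC M - toC N :=
  Matrix.map_sub _ (by simp) M N

lemma toC_transpose {k l : Type*} (M : Matrix k l ℝ) : toC Mᵀ = (toC M)ᵀ :=
  Matrix.transpose_map

lemma pinv_symm {m : Type*} [Fintype m] (RX RXd : Matrix m m ℝ)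
    (hRXs : RXᵀ = RX) (pen1 : RX * RXd * RX = RX) (pen2 : RXd * RX * RXd = RXd)
    (pen3 : (RX * RXd)ᵀ = RX * RXd) (pen4 : (RXd * RX)ᵀ = RXd * RX) :
    RXdᵀ = RXd := by
  have p3' : RXdᵀ * RX = RX * RXd := by
    rw [← pen3, transpose_mul, hRXs]
  have p4' : RX * RXdᵀ = RXd * RX := by
    rw [← pen4, transpose_mul, hRXs]
  have hcomm : RXd * RX = RX * RXd := by
    calc RXd * RX = RX * RXdᵀ := p4'.symm
    _ = (RX * RXd * RX) * RXdᵀ := by rw [pen1]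
    _ = (RX * RXd) * (RX * RXdᵀ) := by rw [Matrix.mul_assoc]
    _ = (RXdᵀ * RX) * (RXd * RX) := by rw [p3', p4']
    _ = RXdᵀ * (RX * RXd * RX) := by simp only [Matrix.mul_assoc]
    _ = RXdᵀ * RX := by rw [pen1]
    _ = RX * RXd := p3'
  have e2 : RX * RXdᵀ = RX * RXd := p4'.trans hcomm
  have e1 : RXdᵀ * RX = RXd * RX := p3'.trans hcomm.symm
  calc RXdᵀ = RXdᵀ * RX * RXdᵀ := by
        have := congrArg Matrix.transpose pen2
        rw [transpose_mul, transpose_mul, hRXs] at this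
        rw [← Matrix.mul_assoc] at this
        exact this.symm
    _ = (RXd * RX) * RXdᵀ := by rw [e1]
    _ = RXd * (RX * RXdᵀ) := by rw [Matrix.mul_assoc]
    _ = RXd * (RX * RXd) := by rw [e2]
    _ = RXd * RX * RXd := by rw [Matrix.mul_assoc]
    _ = RXd := pen2

lemma ker_fact {k m : Type*} [Fintype m] [DecidableEq m] (RX RXd : Matrix m m ℝ)
    (SX : Matrix k m ℝ) (pen1 : RX * RXd * RX = RX)
    (hker : ∀ v : m → ℝ, RX.mulVec v = 0 → SX.mulVec v = 0) :
    SX * (RXd * RX) = SX := by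
  have step : ∀ v : m → ℝ, (SX * (RXd * RX - 1)).mulVec v = 0 := by
    intro v
    rw [← Matrix.mulVec_mulVec]
    apply hker
    rw [Matrix.mulVec_mulVec]
    have : RX * (RXd * RX - 1) = 0 := by
      rw [Matrix.mul_sub, Matrix.mul_one, ← Matrix.mul_assoc, pen1, sub_self]
    rw [this, Matrix.zero_mulVec]
  have hz : SX * (RXd * RX - 1) = 0 := by
    ext i j
    have h2 := step (Pi.single j 1)
    rw [Matrix.mulVec_single_one] at h2
    have := congrFun h2 i
    simpa using this
  rw [Matrix.mul_sub, Matrix.mul_one, sub_eq_zero] at hz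
  exact hz

theorem stmt_19 (n m : ℕ)
    (A : Matrix (Fin n) (Fin n) ℝ) (B : Matrix (Fin n) (Fin m) ℝ)
    (Q : Matrix (Fin n) (Fin n) ℝ) (S : Matrix (Fin n) (Fin m) ℝ)
    (R : Matrix (Fin m) (Fin m) ℝ)
    (hQ : Qᵀ = Q) (hR : Rᵀ = R)
    (X : Matrix (Fin n) (Fin n) ℝ) (hX : Xᵀ = X)
    (RXd : Matrix (Fin m) (Fin m) ℝ)
    (pen1 : (R + Bᵀ * X * B) * RXd * (R + Bᵀ * X * B) = R + Bᵀ * X * B)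
    (pen2 : RXd * (R + Bᵀ * X * B) * RXd = RXd)
    (pen3 : ((R + Bᵀ * X * B) * RXd)ᵀ = (R + Bᵀ * X * B) * RXd)
    (pen4 : (RXd * (R + Bᵀ * X * B))ᵀ = RXd * (R + Bᵀ * X * B))
    (hGDARE : X = Aᵀ * X * A - (Aᵀ * X * B + S) * RXd * (Aᵀ * X * B + S)ᵀ + Q)
    (hker : ∀ v : Fin m → ℝ, (R + Bᵀ * X * B).mulVec v = 0 → (Aᵀ * X * B + S).mulVec v = 0) :
    ∀ z : ℂ, z ≠ 0 →
      IsUnit (z • (1 : Matrix (Fin n) (Fin n) ℂ) - toC A) →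
      IsUnit (z⁻¹ • (1 : Matrix (Fin n) (Fin n) ℂ) - toC Aᵀ) →
      fromCols (toC Bᵀ * (z⁻¹ • (1 : Matrix (Fin n) (Fin n) ℂ) - toC Aᵀ)⁻¹)
          (1 : Matrix (Fin m) (Fin m) ℂ)
        * fromBlocks (toC Q) (toC S) (toC Sᵀ) (toC R)
        * fromRows ((z • (1 : Matrix (Fin n) (Fin n) ℂ) - toC A)⁻¹ * toC B)
            (1 : Matrix (Fin m) (Fin m) ℂ)
      = ((1 : Matrix (Fin m) (Fin m) ℂ)
            + toC Bᵀ * (z⁻¹ • (1 : Matrix (Fin n) (Fin n) ℂ) - toC Aᵀ)⁻¹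
              * toC (RXd * (Aᵀ * X * B + S)ᵀ)ᵀ)
          * toC (R + Bᵀ * X * B)
          * ((1 : Matrix (Fin m) (Fin m) ℂ)
            + toC (RXd * (Aᵀ * X * B + S)ᵀ)
              * (z • (1 : Matrix (Fin n) (Fin n) ℂ) - toC A)⁻¹ * toC B) := by
  intro z hz hL hM
  set SXr := Aᵀ * X * B + S with hSXr
  set RXr := R + Bᵀ * X * B with hRXr
  -- real facts
  have hRXs : RXrᵀ = RXr := by
    rw [hRXr]
    simp [Matrix.transpose_add, Matrix.transpose_mul, hR, hX, Matrix.mul_assoc]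
  have hsym : RXdᵀ = RXd := pinv_symm RXr RXd hRXs pen1 pen2 pen3 pen4
  have hEfact : SXr * (RXd * RXr) = SXr := ker_fact RXr RXd SXr pen1 hker
  have f1 : RXr * (RXd * SXrᵀ) = SXrᵀ := by
    have h := congrArg Matrix.transpose hEfact
    rw [transpose_mul, transpose_mul, hRXs, hsym, Matrix.mul_assoc] at h
    exact h
  have rSXT : SXrᵀ = Bᵀ * (X * A) + Sᵀ := by
    rw [hSXr]
    simp [Matrix.transpose_add, Matrix.transpose_mul, hX, Matrix.mul_assoc]
  have rQ : Q = X - Aᵀ * X * A + SXr * RXd * SXrᵀ := by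
    have h2 : X - (Aᵀ * X * A - SXr * RXd * SXrᵀ) = Q := sub_eq_iff_eq_add'.mpr hGDARE
    rw [← h2]; abel
  -- pass to ℂ
  rw [fromCols_mul_fromBlocks, fromCols_mul_fromRows]
  have hKt : (RXd * SXrᵀ)ᵀ = SXr * RXd := by
    rw [transpose_mul, transpose_transpose, hsym]
  rw [hKt]
  rw [toC_transpose A] at hM
  simp only [toC_mul, toC_transpose]
  set Ac := toC A with hAc
  set Bc := toC B with hBc
  set Xc := toC X with hXc
  set L := z • (1 : Matrix (Fin n) (Fin n) ℂ) - Ac with hLdef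
  set Mm := z⁻¹ • (1 : Matrix (Fin n) (Fin n) ℂ) - Acᵀ with hMdef
  have hL1 : L * L⁻¹ = 1 := mul_nonsing_inv _ ((Matrix.isUnit_iff_isUnit_det _).mp hL)
  have hM2 : Mm⁻¹ * Mm = 1 := nonsing_inv_mul _ ((Matrix.isUnit_iff_isUnit_det _).mp hM)
  have hMMi : ∀ {k : Type} (w : Matrix (Fin n) k ℂ), Mm⁻¹ * (Mm * w) = w := by
    intro k w; rw [← Matrix.mul_assoc, hM2, Matrix.one_mul]
  have hLLi : ∀ {k : Type} (w : Matrix (Fin n) k ℂ), L * (L⁻¹ * w) = w := by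
    intro k w; rw [← Matrix.mul_assoc, hL1, Matrix.one_mul]
  -- complexified algebraic facts
  have g1 : ∀ {k : Type} (w : Matrix (Fin n) k ℂ),
      toC RXr * (toC RXd * ((toC SXr)ᵀ * w)) = (toC SXr)ᵀ * w := by
    intro k w
    have h := congrArg toC f1
    rw [toC_mul, toC_mul, toC_transpose] at h
    rw [← Matrix.mul_assoc, ← Matrix.mul_assoc, Matrix.mul_assoc (toC RXr), h]
  have g2' : toC SXr * (toC RXd * toC RXr) = toC SXr := by
    have h := congrArg toC hEfact
    rw [toC_mul, toC_mul] at h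
    exact h
  have hQc : toC Q = Xc - Acᵀ * Xc * Ac + toC SXr * toC RXd * (toC SXr)ᵀ := by
    have h := congrArg toC rQ
    rw [toC_add, toC_sub, toC_mul, toC_mul, toC_mul, toC_mul, toC_transpose,
      toC_transpose] at h
    exact h
  have hRXc : toC RXr = toC R + Bcᵀ * Xc * Bc := by
    rw [hRXr, toC_add, toC_mul, toC_mul, toC_transpose]
  have hSXc : toC SXr = Acᵀ * Xc * Bc + toC S := by
    rw [hSXr, toC_add, toC_mul, toC_mul, toC_transpose]
  have hSXTc : (toC SXr)ᵀ = Bcᵀ * (Xc * Ac) + (toC S)ᵀ := by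
    have h := congrArg toC rSXT
    rw [toC_add, toC_mul, toC_mul, toC_transpose, toC_transpose, toC_transpose] at h
    exact h
  -- key resolvent identity
  have key00 : Xc = Mm * (Xc * L) + Acᵀ * (Xc * L) + Mm * (Xc * Ac) + Acᵀ * (Xc * Ac) := by
    rw [hMdef, hLdef]
    simp only [Matrix.mul_sub, Matrix.sub_mul, mul_smul_comm, smul_mul_assoc,
      Matrix.one_mul, Matrix.mul_one, smul_smul, inv_mul_cancel₀ hz,
      mul_inv_cancel₀ hz, one_smul, smul_sub]
    abel
  have keyQ : Mm⁻¹ * (Xc * (L⁻¹ * Bc))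
      = Xc * Bc + Mm⁻¹ * (Acᵀ * (Xc * Bc)) + Xc * (Ac * (L⁻¹ * Bc))
        + Mm⁻¹ * (Acᵀ * (Xc * (Ac * (L⁻¹ * Bc)))) := by
    have h := congrArg (fun Y => Mm⁻¹ * (Y * (L⁻¹ * Bc))) key00
    simp only [Matrix.add_mul, Matrix.mul_add, Matrix.mul_assoc] at h
    simp only [hLLi, hMMi] at h
    exact h
  -- main computation
  rw [hQc]
  simp only [Matrix.mul_add, Matrix.add_mul, Matrix.mul_sub, Matrix.sub_mul,
    Matrix.mul_one, Matrix.one_mul, Matrix.mul_assoc]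
  simp only [g1, g2']
  simp only [hSXTc]
  simp only [hSXc, hRXc]
  simp only [Matrix.mul_add, Matrix.add_mul, Matrix.mul_sub, Matrix.sub_mul,
    Matrix.mul_one, Matrix.one_mul, Matrix.mul_assoc]
  rw [keyQ]
  simp only [Matrix.mul_add, Matrix.mul_assoc]
  abel
end
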